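/- The matrix J whose (λ,μ) entry is given by the bifork multiplication table becomes, at q = 1, a diagonal matrix with all diagonal entries equal to (−t^{−1}+1)(1+t) and hence is non-singular; in particular det J, as an element of ℚ(t,q), is non-zero. -/

import Mathlib

open Matrix

noncomputable section

/-- Index set `{(i,j) : 1 ≤ i < j ≤ n}` for the Lawrence–Krammer basis. -/
abbrev BP (n : ℕ) := {p : Fin (n + 1) × Fin (n + 1) // 0 < (p.1 : ℕ) ∧ (p.1 : ℕ) < (p.2 : ℕ)}

/-- The bifork multiplication table `X_{k,l}·X*_{i,j}` with parameters `t`, `q`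
(for indices with `k < l` and `i < j`). -/
def Jent {K : Type*} [Field K] (t q : K) (k l i j : ℕ) : K :=
  if i = k ∧ j = l then (-t⁻¹ + q) * (q⁻¹ + q * t)
  else if (i = k ∧ l < j) ∨ (k < i ∧ j = l) then t⁻¹ * (1 - q⁻¹)
  else if j = k then -(1 - q⁻¹)
  else if (i < k ∧ j = l) ∨ (i = k ∧ j < l) then -(t * q * (1 - q))
  else if l = i then q * (1 - q)
  else if k < i ∧ i < l ∧ l < j then -((1 - q) ^ 2 * (t⁻¹ * q⁻¹ + 1))
  else if i < k ∧ k < j ∧ j < l then (1 - q) ^ 2 * (q⁻¹ + t)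
  else 0

/-- The matrix `J` given by the bifork multiplication table, `J_{(k,l),(i,j)}`. -/
def Jmat {K : Type*} [Field K] (t q : K) (n : ℕ) : Matrix (BP n) (BP n) K :=
  fun r c => Jent t q (r.val.1 : ℕ) (r.val.2 : ℕ) (c.val.1 : ℕ) (c.val.2 : ℕ)

/-- The field `ℚ(t,q)`. -/
abbrev F2 := FractionRing (MvPolynomial (Fin 2) ℚ)

/-- The variable `t` in `ℚ(t,q)`. -/
def tt : F2 := algebraMap (MvPolynomial (Fin 2) ℚ) F2 (MvPolynomial.X 0)

/-- The variable `q` in `ℚ(t,q)`. -/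
def qq : F2 := algebraMap (MvPolynomial (Fin 2) ℚ) F2 (MvPolynomial.X 1)

/-- Polynomial (denominator-cleared) version of `Jent`: `t*q*Jent`. -/
def Pent {R : Type*} [CommRing R] (t q : R) (k l i j : ℕ) : R :=
  if i = k ∧ j = l then q ^ 3 * t ^ 2 + q * t - q ^ 2 * t - 1
  else if (i = k ∧ l < j) ∨ (k < i ∧ j = l) then q - 1
  else if j = k then t - t * q
  else if (i < k ∧ j = l) ∨ (i = k ∧ j < l) then t ^ 2 * q ^ 3 - t ^ 2 * q ^ 2
  else if l = i then t * q ^ 2 - t * q ^ 3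
  else if k < i ∧ i < l ∧ l < j then -((1 - q) ^ 2 * (1 + t * q))
  else if i < k ∧ k < j ∧ j < l then (1 - q) ^ 2 * (t + t ^ 2 * q)
  else 0

lemma Pent_eq_mul {K : Type*} [Field K] (t q : K) (ht : t ≠ 0) (hq : q ≠ 0)
    (k l i j : ℕ) : t * q * Jent t q k l i j = Pent t q k l i j := by
  unfold Jent Pent
  split_ifs <;> (try field_simp) <;> ring

lemma Pent_map {R S : Type*} [CommRing R] [CommRing S] (f : R →+* S) (t q : R)
    (k l i j : ℕ) : f (Pent t q k l i j) = Pent (f t) (f q) k l i j := by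
  unfold Pent
  split_ifs <;>
    simp only [_root_.map_mul, _root_.map_add, map_sub, map_neg, map_pow, _root_.map_one,
      map_zero]

lemma Pent_q_one {R : Type*} [CommRing R] (t : R) (k l i j : ℕ) :
    Pent t 1 k l i j = if i = k ∧ j = l then t ^ 2 - 1 else 0 := by
  unfold Pent
  split_ifs <;> ring

lemma BP_eq_iff {n : ℕ} (r c : BP n) :
    r = c ↔ ((c.val.1 : ℕ) = (r.val.1 : ℕ) ∧ (c.val.2 : ℕ) = (r.val.2 : ℕ)) := by
  constructor
  · rintro rfl; exact ⟨rfl, rfl⟩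
  · rintro ⟨h1, h2⟩
    exact (Subtype.ext (Prod.ext (Fin.ext h1.symm) (Fin.ext h2.symm)))

/-- At `q = 1` the bifork pairing matrix `J` is diagonal with all
diagonal entries equal to `(−t⁻¹+1)(1+t)`, and hence `J` is non-singular: its
determinant, as an element of `ℚ(t,q)`, is non-zero. -/
theorem bifork_matrix_nonsingular (n : ℕ) :
    (∀ r c : BP n,
        (r = c → Jmat (RatFunc.X : RatFunc ℚ) 1 n r c = (-(RatFunc.X)⁻¹ + 1) * (1 + RatFunc.X)) ∧
        (r ≠ c → Jmat (RatFunc.X : RatFunc ℚ) 1 n r c = 0)) ∧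
    (Jmat tt qq n).det ≠ 0 := by
  constructor
  · intro r c
    constructor
    · rintro rfl
      show Jent _ _ _ _ _ _ = _
      rw [Jent, if_pos ⟨rfl, rfl⟩]
      norm_num
    · intro h
      have hne : ¬((c.val.1 : ℕ) = (r.val.1 : ℕ) ∧ (c.val.2 : ℕ) = (r.val.2 : ℕ)) :=
        fun hc => h ((BP_eq_iff r c).mpr hc)
      show Jent _ _ _ _ _ _ = 0
      rw [Jent]
      split_ifs with h1 <;> norm_num
      
  · -- determinant part
    have htt : tt ≠ 0 := by
      rw [tt, Ne, IsFractionRing.to_map_eq_zero_iff]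
      exact MvPolynomial.X_ne_zero 0
    have hqq : qq ≠ 0 := by
      rw [qq, Ne, IsFractionRing.to_map_eq_zero_iff]
      exact MvPolynomial.X_ne_zero 1
    set φ : MvPolynomial (Fin 2) ℚ →+* F2 := algebraMap (MvPolynomial (Fin 2) ℚ) F2 with hφ
    let M : Matrix (BP n) (BP n) (MvPolynomial (Fin 2) ℚ) :=
      fun r c => Pent (MvPolynomial.X 0) (MvPolynomial.X 1)
        (r.val.1 : ℕ) (r.val.2 : ℕ) (c.val.1 : ℕ) (c.val.2 : ℕ)
    have hMφ : M.map φ = (tt * qq) • Jmat tt qq n := by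
      ext r c
      rw [Matrix.map_apply]
      simp only [Matrix.smul_apply, smul_eq_mul, M, Jmat]
      rw [Pent_map]
      exact (Pent_eq_mul tt qq htt hqq _ _ _ _).symm
    let ψ : MvPolynomial (Fin 2) ℚ →+* Polynomial ℚ :=
      (MvPolynomial.aeval (fun i : Fin 2 => if i = 0 then Polynomial.X else 1)).toRingHom
    have hψ0 : ψ (MvPolynomial.X 0) = Polynomial.X := by simp [ψ]
    have hψ1 : ψ (MvPolynomial.X 1) = 1 := by simp [ψ]
    have hMψ : M.map ψ = Matrix.diagonal (fun _ => (Polynomial.X : Polynomial ℚ) ^ 2 - 1) := by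
      refine Matrix.ext fun r c => ?_
      rw [Matrix.map_apply]
      simp only [Matrix.diagonal_apply, M]
      rw [Pent_map, hψ0, hψ1, Pent_q_one]
      by_cases h : r = c
      · rw [if_pos ((BP_eq_iff r c).mp h), if_pos h]
      · rw [if_neg (fun hc => h ((BP_eq_iff r c).mpr hc)), if_neg h]
    have hXsq : (Polynomial.X : Polynomial ℚ) ^ 2 - 1 ≠ 0 := by
      intro h
      have := congrArg (Polynomial.eval 0) h
      simp at this
    have hdetM : M.det ≠ 0 := by
      intro h
      have h2 : ψ M.det = 0 := by rw [h, map_zero]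
      rw [RingHom.map_det, RingHom.mapMatrix_apply, hMψ, Matrix.det_diagonal,
        Finset.prod_const] at h2
      exact hXsq (pow_eq_zero_iff'.mp h2).1
    intro hdet
    apply hdetM
    apply IsFractionRing.injective (MvPolynomial (Fin 2) ℚ) F2
    rw [map_zero, ← hφ]
    show φ M.det = 0
    rw [RingHom.map_det, RingHom.mapMatrix_apply, hMφ, Matrix.det_smul, hdet, mul_zero]
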